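/- For every Γ > 0 there exists c > 0 such that for every integer n ≥ 1 and every real-valued random variable X with E(X²) ≤ Γ·n, one has (1/(2π))∫_{−π}^{π} |E(e^{iθX})|² dθ ≥ c/√n. -/

import Mathlib

open MeasureTheory

theorem char_fn_L2_lower_bound (Γ : ℝ) (hΓ : 0 < Γ) :
    ∃ c : ℝ, 0 < c ∧
      ∀ (n : ℕ), 1 ≤ n →
      ∀ (Ω : Type) (_ : MeasurableSpace Ω) (P : Measure Ω),
        IsProbabilityMeasure P →
        ∀ (X : Ω → ℝ), Measurable X →
          Integrable (fun ω => (X ω)^2) P →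
          (∫ ω, (X ω)^2 ∂P) ≤ Γ * n →
          c / Real.sqrt n ≤
            (1 / (2 * Real.pi)) *
              ∫ θ in (-Real.pi)..Real.pi,
                ‖∫ ω, Complex.exp (Complex.I * (θ : ℂ) * (X ω : ℂ)) ∂P‖^2 := by
  have hπ := Real.pi_pos
  refine ⟨min Real.pi (1 / Real.sqrt Γ) / (4 * Real.pi), by positivity, ?_⟩
  intro n hn Ω mΩ P hP X hX hX2 hmom
  set φ : ℝ → ℂ := fun θ => ∫ ω, Complex.exp (Complex.I * (θ : ℂ) * (X ω : ℂ)) ∂P with hφ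
  have hn1 : (1 : ℝ) ≤ (n : ℝ) := by exact_mod_cast hn
  have hΓn : 0 < Γ * n := by positivity
  -- measurability and integrability of the integrand
  have hmeasθ : ∀ θ : ℝ, Measurable (fun ω => Complex.exp (Complex.I * (θ : ℂ) * (X ω : ℂ))) := by
    intro θ
    exact Complex.measurable_exp.comp (measurable_const.mul (Complex.measurable_ofReal.comp hX))
  have hnorm1 : ∀ (θ x : ℝ), ‖Complex.exp (Complex.I * (θ : ℂ) * (x : ℂ))‖ = 1 := by
    intro θ x
    rw [Complex.norm_exp]
    simp
  have hintθ : ∀ θ : ℝ, Integrable (fun ω => Complex.exp (Complex.I * (θ : ℂ) * (X ω : ℂ))) P := by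
    intro θ
    refine Integrable.mono' (integrable_const 1) (hmeasθ θ).aestronglyMeasurable ?_
    exact Filter.Eventually.of_forall fun ω => le_of_eq (hnorm1 θ (X ω))
  have hcosint : ∀ θ : ℝ, Integrable (fun ω => Real.cos (θ * X ω)) P := by
    intro θ
    refine Integrable.mono' (integrable_const 1) ?_ ?_
    · exact (Real.measurable_cos.comp (measurable_const.mul hX)).aestronglyMeasurable
    · exact Filter.Eventually.of_forall fun ω => by
        simpa using Real.abs_cos_le_one (θ * X ω)
  -- real part of φ
  have hre : ∀ θ : ℝ, (φ θ).re = ∫ ω, Real.cos (θ * X ω) ∂P := by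
    intro θ
    rw [hφ]
    simp only
    rw [← RCLike.re_to_complex, ← integral_re (hintθ θ)]
    refine integral_congr_ae (Filter.Eventually.of_forall fun ω => ?_)
    simp only [RCLike.re_to_complex]
    rw [show Complex.I * (θ : ℂ) * (X ω : ℂ) = ((θ * X ω : ℝ) : ℂ) * Complex.I by
      push_cast; ring, Complex.exp_ofReal_mul_I_re]
  -- lower bound on real part
  have hlow : ∀ θ : ℝ, 1 - θ ^ 2 * (Γ * n) / 2 ≤ (φ θ).re := by
    intro θ
    rw [hre θ]
    have h1 : Integrable (fun ω => 1 - θ ^ 2 / 2 * (X ω) ^ 2) P :=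
      (integrable_const 1).sub (hX2.const_mul _)
    have h2 : ∫ ω, (1 - θ ^ 2 / 2 * (X ω) ^ 2) ∂P ≤ ∫ ω, Real.cos (θ * X ω) ∂P := by
      refine integral_mono h1 (hcosint θ) fun ω => ?_
      have := Real.one_sub_sq_div_two_le_cos (x := θ * X ω)
      nlinarith [this]
    have h3 : ∫ ω, (1 - θ ^ 2 / 2 * (X ω) ^ 2) ∂P
        = 1 - θ ^ 2 / 2 * ∫ ω, (X ω) ^ 2 ∂P := by
      rw [integral_sub (integrable_const 1) (hX2.const_mul _), integral_const,
        integral_const_mul]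
      simp
    have h4 : 1 - θ ^ 2 * (Γ * n) / 2 ≤ 1 - θ ^ 2 / 2 * ∫ ω, (X ω) ^ 2 ∂P := by
      nlinarith [sq_nonneg θ]
    linarith [h2, h3 ▸ h2]
  -- continuity of φ
  have hφcont : Continuous φ := by
    rw [hφ]
    refine continuous_of_dominated (fun θ => (hmeasθ θ).aestronglyMeasurable)
      (fun θ => Filter.Eventually.of_forall fun ω => le_of_eq (hnorm1 θ (X ω)))
      (integrable_const 1) ?_
    exact Filter.Eventually.of_forall fun ω =>
      Complex.continuous_exp.comp
        ((continuous_const.mul Complex.continuous_ofReal).mul continuous_const)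
  set δ : ℝ := min Real.pi (1 / Real.sqrt (Γ * n)) with hδ
  have hsΓn : 0 < Real.sqrt (Γ * n) := Real.sqrt_pos.mpr hΓn
  have hδpos : 0 < δ := lt_min hπ (by positivity)
  have hδπ : δ ≤ Real.pi := min_le_left _ _
  have hδsq : δ ^ 2 * (Γ * n) ≤ 1 := by
    have h1 : δ ≤ 1 / Real.sqrt (Γ * n) := min_le_right _ _
    have h0 : δ ^ 2 ≤ (1 / Real.sqrt (Γ * n)) ^ 2 := pow_le_pow_left₀ hδpos.le h1 2
    have h2 : (1 / Real.sqrt (Γ * n)) ^ 2 = 1 / (Γ * n) := by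
      rw [div_pow, one_pow, Real.sq_sqrt hΓn.le]
    rw [h2] at h0
    calc δ ^ 2 * (Γ * n) ≤ 1 / (Γ * n) * (Γ * n) := by nlinarith
      _ = 1 := by field_simp
  have key : ∀ θ ∈ Set.Icc (-δ) δ, (1/4 : ℝ) ≤ ‖φ θ‖ ^ 2 := by
    intro θ hθ
    have hθsq : θ ^ 2 ≤ δ ^ 2 := sq_le_sq' hθ.1 hθ.2
    have hre2 : (1/2 : ℝ) ≤ (φ θ).re := by
      have := hlow θ
      nlinarith [hΓn]
    have hns : (φ θ).re ^ 2 ≤ ‖φ θ‖ ^ 2 := by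
      rw [Complex.sq_norm, Complex.normSq_apply]
      nlinarith [sq_nonneg (φ θ).im]
    nlinarith
  have hcont2 : Continuous fun θ => ‖φ θ‖ ^ 2 := hφcont.norm.pow 2
  have hii : IntervalIntegrable (fun θ => ‖φ θ‖ ^ 2) volume (-Real.pi) Real.pi :=
    hcont2.intervalIntegrable _ _
  have step1 : δ / 2 ≤ ∫ θ in (-δ)..δ, ‖φ θ‖ ^ 2 := by
    have h := intervalIntegral.integral_mono_on (by linarith : -δ ≤ δ)
      (intervalIntegrable_const (μ := volume)) (hcont2.intervalIntegrable _ _) key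
    rwa [intervalIntegral.integral_const, smul_eq_mul,
      show (δ - -δ) * (1/4 : ℝ) = δ / 2 by ring] at h
  have step2 : (∫ θ in (-δ)..δ, ‖φ θ‖ ^ 2) ≤ ∫ θ in (-Real.pi)..Real.pi, ‖φ θ‖ ^ 2 := by
    apply intervalIntegral.integral_mono_interval (by linarith) (by linarith) hδπ
    · exact Filter.Eventually.of_forall fun θ => by positivity
    · exact hii
  have hI : δ / 2 ≤ ∫ θ in (-Real.pi)..Real.pi, ‖φ θ‖ ^ 2 := le_trans step1 step2
  have hsΓ : 0 < Real.sqrt Γ := Real.sqrt_pos.mpr hΓ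
  have hsn : (1 : ℝ) ≤ Real.sqrt n := by
    rw [show (1:ℝ) = Real.sqrt 1 by simp]
    exact Real.sqrt_le_sqrt hn1
  have hsnpos : (0 : ℝ) < Real.sqrt n := by linarith
  have hδlb : min Real.pi (1 / Real.sqrt Γ) / Real.sqrt n ≤ δ := by
    rw [hδ]
    refine le_min ?_ ?_
    · calc min Real.pi (1 / Real.sqrt Γ) / Real.sqrt n
          ≤ Real.pi / Real.sqrt n := by gcongr; exact min_le_left _ _
        _ ≤ Real.pi := by
            rw [div_le_iff₀ hsnpos]; nlinarith
    · calc min Real.pi (1 / Real.sqrt Γ) / Real.sqrt n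
          ≤ (1 / Real.sqrt Γ) / Real.sqrt n := by gcongr; exact min_le_right _ _
        _ = 1 / Real.sqrt (Γ * n) := by
            rw [Real.sqrt_mul hΓ.le, div_div]
  calc min Real.pi (1 / Real.sqrt Γ) / (4 * Real.pi) / Real.sqrt n
      = (min Real.pi (1 / Real.sqrt Γ) / Real.sqrt n) / (4 * Real.pi) := by ring
    _ ≤ δ / (4 * Real.pi) := by gcongr <;> simp [hδlb]
    _ = (1 / (2 * Real.pi)) * (δ / 2) := by field_simp; norm_num
    _ ≤ (1 / (2 * Real.pi)) *
        ∫ θ in (-Real.pi)..Real.pi, ‖φ θ‖ ^ 2 :=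
          mul_le_mul_of_nonneg_left hI (by positivity)
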